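/- Let D₀ ⊆ ℤ^m be an ordered linearly independent set of size k, and let I ⊆ [m] with |I| = m − k be a set of strongest coordinates for D₀, meaning |det(M_{D₀}^I)| ≥ |det(M_{D₀}^J)| for every J ⊆ [m] with |J| = m − k, where M_{D₀}^J is the m×k matrix of the vectors of D₀ with rows indexed by J deleted. Let D be the ordered basis of ℝ^m consisting of the vectors of D₀ followed by the standard basis vectors {e_i}_{i∈I}. Then every entry in the last (m−k) rows of the matrix M_D⁻¹ lies in the interval [−1, 1]. -/

import Mathlib

/-- The matrix whose first `k` columns are the integer vectors `b` and whose remaining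
columns are the standard basis vectors indexed by `I` (in increasing order). -/
noncomputable def matOf (m k : ℕ) (hk : k ≤ m) (b : Fin k → Fin m → ℤ)
    (I : Finset (Fin m)) (hI : I.card = m - k) : Matrix (Fin m) (Fin m) ℝ :=
  Matrix.of fun i j =>
    if h : (j : ℕ) < k then ((b ⟨j, h⟩ i : ℤ) : ℝ)
    else if (↑(I.orderIsoOfFin hI ⟨(j : ℕ) - k, by have := j.isLt; omega⟩) : Fin m) = i
      then 1 else 0

/-- `|det M_{b}^J|`: absolute value of the determinant of the `k × k` matrix
obtained from the columns `b` by deleting the rows indexed by `J`. -/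
noncomputable def detAbs (m k : ℕ) (b : Fin k → Fin m → ℤ) (J : Finset (Fin m)) : ℝ :=
  if h : Jᶜ.card = k then
    |Matrix.det (Matrix.of fun i j : Fin k =>
      ((b j (↑(Jᶜ.orderIsoOfFin h i)) : ℤ) : ℝ))|
  else 0

noncomputable def eMat (m k : ℕ) (c : Fin k → Fin m → ℝ) (g : Fin (m - k) → Fin m) :
    Matrix (Fin m) (Fin m) ℝ :=
  Matrix.of fun i j =>
    if h : (j : ℕ) < k then c ⟨j, h⟩ i
    else if g ⟨(j : ℕ) - k, by have := j.isLt; omega⟩ = i then 1 else 0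

lemma abs_det_eMat (m k : ℕ) (hk : k ≤ m) (c : Fin k → Fin m → ℝ)
    (g : Fin (m - k) → Fin m) (hg : Function.Injective g)
    (h : ((Finset.image g Finset.univ)ᶜ).card = k) :
    |Matrix.det (eMat m k c g)| =
    |Matrix.det (Matrix.of fun i j : Fin k =>
        c j (↑((Finset.image g Finset.univ)ᶜ.orderIsoOfFin h i)))| := by
  set S : Finset (Fin m) := Finset.image g Finset.univ with hS
  have hkm : k + (m - k) = m := by omega
  set ρ : Fin k → Fin m := fun i => ↑(Sᶜ.orderIsoOfFin h i) with hρ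
  have hρmem : ∀ i, ρ i ∈ Sᶜ := fun i => (Sᶜ.orderIsoOfFin h i).2
  have hgmem : ∀ t, g t ∈ S := fun t => Finset.mem_image_of_mem g (Finset.mem_univ t)
  have hρinj : Function.Injective ρ := fun a b hab => by
    have := (Sᶜ.orderIsoOfFin h).injective (Subtype.ext hab); exact this
  set ψ : Fin k ⊕ Fin (m - k) → Fin m := Sum.elim ρ g with hψ
  have hψinj : Function.Injective ψ := by
    rintro (a | a) (b | b) hab <;>
      simp only [hψ, Sum.elim_inl, Sum.elim_inr] at hab
    · exact congrArg Sum.inl (hρinj hab)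
    · exact absurd (hρmem a) (by simp [hab, Finset.mem_compl, hgmem b])
    · exact absurd (hρmem b) (by simp [← hab, Finset.mem_compl, hgmem a])
    · exact congrArg Sum.inr (hg hab)
  have hcard : Fintype.card (Fin k ⊕ Fin (m - k)) = Fintype.card (Fin m) := by simp [hkm]
  have hψbij : Function.Bijective ψ :=
    (Fintype.bijective_iff_injective_and_card ψ).2 ⟨hψinj, hcard⟩
  set e : (Fin k ⊕ Fin (m - k)) ≃ Fin m := Equiv.ofBijective ψ hψbij with he
  set φ : (Fin k ⊕ Fin (m - k)) ≃ Fin m := finSumFinEquiv.trans (finCongr hkm) with hφ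
  set π : Equiv.Perm (Fin m) := φ.symm.trans e with hπ
  have hsub : (eMat m k c g).submatrix e φ =
      Matrix.fromBlocks (Matrix.of fun i j : Fin k => c j (ρ i)) 0
        (Matrix.of fun s : Fin (m - k) => fun j : Fin k => c j (g s)) 1 := by
    ext x y
    cases x with
    | inl i =>
      cases y with
      | inl j =>
        have h1 : e (Sum.inl i) = ρ i := rfl
        have h2 : φ (Sum.inl j) = Fin.castLE hk j := by
          simp [hφ, finSumFinEquiv, Fin.castLE, finCongr]
          rfl
        simp [Matrix.submatrix_apply, h1, h2, eMat, j.isLt]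
      | inr t =>
        have h1 : e (Sum.inl i) = ρ i := rfl
        have h2 : ((φ (Sum.inr t)) : ℕ) = k + t := by
          simp [hφ, finSumFinEquiv]
        have hnlt : ¬ ((φ (Sum.inr t)) : ℕ) < k := by omega
        have h3 : (⟨((φ (Sum.inr t)) : ℕ) - k, by have := (φ (Sum.inr t)).isLt; omega⟩ : Fin (m - k)) = t := by
          ext; simp [h2]
        have h4 : ¬ g t = ρ i := by
          intro hgt
          exact absurd (hgt ▸ hgmem t) (by simpa [Finset.mem_compl] using hρmem i)
        simp [Matrix.submatrix_apply, h1, eMat, hnlt, h3, h4]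
    | inr s =>
      cases y with
      | inl j =>
        have h1 : e (Sum.inr s) = g s := rfl
        have h2 : φ (Sum.inl j) = Fin.castLE hk j := by
          simp [hφ, finSumFinEquiv, Fin.castLE, finCongr]
          rfl
        simp [Matrix.submatrix_apply, h1, h2, eMat, j.isLt]
      | inr t =>
        have h1 : e (Sum.inr s) = g s := rfl
        have h2 : ((φ (Sum.inr t)) : ℕ) = k + t := by
          simp [hφ, finSumFinEquiv]
        have hnlt : ¬ ((φ (Sum.inr t)) : ℕ) < k := by omega
        have h3 : (⟨((φ (Sum.inr t)) : ℕ) - k, by have := (φ (Sum.inr t)).isLt; omega⟩ : Fin (m - k)) = t := by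
          ext; simp [h2]
        simp only [Matrix.submatrix_apply, h1, eMat, Matrix.of_apply, dif_neg hnlt, h3,
          Matrix.fromBlocks_apply₂₂]
        rw [Matrix.one_apply]
        by_cases hst : s = t
        · simp [hst]
        · rw [if_neg (fun hgt => hst (hg hgt).symm), if_neg hst]
  have hd1 : ((eMat m k c g).submatrix e φ).det =
      ((eMat m k c g).submatrix π id).det := by
    have : (eMat m k c g).submatrix e φ = ((eMat m k c g).submatrix π id).submatrix φ φ := by
      ext x y; simp [Matrix.submatrix_apply, hπ]
    rw [this, Matrix.det_submatrix_equiv_self]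
  have hd2 : ((eMat m k c g).submatrix π id).det =
      (Equiv.Perm.sign π : ℝ) * (eMat m k c g).det := by
    have := Matrix.det_permute π (eMat m k c g)
    simpa [Matrix.submatrix] using this
  have habs : |((eMat m k c g).submatrix e φ).det| = |(eMat m k c g).det| := by
    rw [hd1, hd2, abs_mul]
    rcases Int.units_eq_one_or (Equiv.Perm.sign π) with hs | hs <;> simp [hs]
  rw [← habs, hsub, Matrix.det_fromBlocks_zero₁₂]
  simp [hρ]
  rfl

theorem stmt7 (m k : ℕ) (hk : k ≤ m) (b : Fin k → Fin m → ℤ)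
    (hind : LinearIndependent ℝ fun i : Fin k => fun j : Fin m => ((b i j : ℤ) : ℝ))
    (I : Finset (Fin m)) (hI : I.card = m - k)
    (hstrong : ∀ J : Finset (Fin m), J.card = m - k → detAbs m k b J ≤ detAbs m k b I) :
    ∀ i j : Fin m, k ≤ (i : ℕ) →
      (matOf m k hk b I hI)⁻¹ i j ∈ Set.Icc (-1 : ℝ) 1 := by
  intro i j hik
  set M : Matrix (Fin m) (Fin m) ℝ := matOf m k hk b I hI with hM
  by_cases hdet : IsUnit M.det
  swap
  · rw [Matrix.nonsing_inv_apply_not_isUnit _ hdet]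
    simp
  set c : Fin k → Fin m → ℝ := fun p q => ((b p q : ℤ) : ℝ) with hc
  set σt : Fin (m - k) → Fin m := fun t => ↑(I.orderIsoOfFin hI t) with hσ
  have hMe : M = eMat m k c σt := rfl
  have hσinj : Function.Injective σt := fun a b hab =>
    (I.orderIsoOfFin hI).injective (Subtype.ext hab)
  have hσmem : ∀ t, σt t ∈ I := fun t => (I.orderIsoOfFin hI t).2
  have himage : Finset.image σt Finset.univ = I := by
    apply Finset.eq_of_subset_of_card_le
    · intro x hx
      obtain ⟨t, _, rfl⟩ := Finset.mem_image.mp hx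
      exact hσmem t
    · rw [Finset.card_image_of_injective _ hσinj, Finset.card_univ, Fintype.card_fin, hI]
  have hcardI : ((Finset.image σt Finset.univ)ᶜ).card = k := by
    rw [Finset.card_compl, Finset.card_image_of_injective _ hσinj, Finset.card_univ,
      Fintype.card_fin, Fintype.card_fin]
    omega
  have habsI : |M.det| = detAbs m k b I := by
    rw [hMe, abs_det_eMat m k hk c σt hσinj hcardI]
    have h2 : detAbs m k b I = detAbs m k b (Finset.image σt Finset.univ) := by rw [himage]
    rw [h2, detAbs, dif_pos hcardI]
  set t₀ : Fin (m - k) := ⟨(i : ℕ) - k, by have := i.isLt; omega⟩ with ht₀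
  have hik' : ¬ ((i : ℕ) < k) := by omega
  suffices hkey : |(M.updateCol i (Pi.single j 1)).det| ≤ |M.det| by
    have hadj : Matrix.adjugate M i j = (M.updateCol i (Pi.single j 1)).det := by
      have h0 : Matrix.adjugate M i j = Matrix.adjugate M.transpose j i := by
        rw [← Matrix.adjugate_transpose]; rfl
      rw [h0, Matrix.adjugate_apply, Matrix.updateRow_transpose, Matrix.det_transpose]
    have hdetne : M.det ≠ 0 := hdet.ne_zero
    have h1 : |Matrix.adjugate M i j| ≤ |M.det| := by rw [hadj]; exact hkey
    rw [Matrix.inv_def, Matrix.smul_apply, smul_eq_mul, Ring.inverse_eq_inv']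
    rw [Set.mem_Icc, ← abs_le]
    calc |M.det⁻¹ * Matrix.adjugate M i j| = |Matrix.adjugate M i j| / |M.det| := by
          rw [abs_mul, abs_inv]; ring
      _ ≤ 1 := by rw [div_le_one (abs_pos.mpr hdetne)]; exact h1
  by_cases hj1 : j = σt t₀
  · have hcol : M.updateCol i (Pi.single j 1) = M := by
      have hcoleq : (Pi.single j (1 : ℝ)) = fun x => M x i := by
        funext x
        have : M x i = if σt t₀ = x then 1 else 0 := by
          simp only [hMe, eMat, Matrix.of_apply, dif_neg hik']
          rfl
        rw [this, ← hj1, Pi.single_apply]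
        by_cases hx : x = j
        · simp [hx]
        · rw [if_neg hx, if_neg (fun hh => hx hh.symm)]
      rw [hcoleq, Matrix.updateCol_eq_self]
    rw [hcol]
  by_cases hj2 : j ∈ I
  · -- duplicate column: det = 0
    obtain ⟨s, hs⟩ := (I.orderIsoOfFin hI).surjective ⟨j, hj2⟩
    have hsj : σt s = j := congrArg Subtype.val hs
    have hst : s ≠ t₀ := fun hh => hj1 (by rw [← hsj, hh])
    set i' : Fin m := ⟨k + (s : ℕ), by have := s.isLt; omega⟩ with hi'
    have hii' : i' ≠ i := by
      intro hh
      apply hst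
      have h4 : (i' : ℕ) = (i : ℕ) := by rw [hh]
      have h5 : (t₀ : ℕ) = (i : ℕ) - k := rfl
      have h6 : (i' : ℕ) = k + (s : ℕ) := rfl
      ext
      omega
    have hzero : (M.updateCol i (Pi.single j 1)).det = 0 := by
      apply Matrix.det_zero_of_column_eq hii'
      intro x
      rw [Matrix.updateCol_apply, if_neg hii', Matrix.updateCol_apply, if_pos rfl]
      have hnlt : ¬ ((i' : ℕ) < k) := by simp only [hi']; omega
      have hfin : (⟨(i' : ℕ) - k, by have := i'.isLt; omega⟩ : Fin (m - k)) = s := by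
        ext; simp only [hi']; omega
      have : M x i' = if σt s = x then 1 else 0 := by
        simp only [hMe, eMat, Matrix.of_apply, dif_neg hnlt, hfin]
      rw [this, hsj, Pi.single_apply]
      by_cases hx : x = j
      · simp [hx]
      · rw [if_neg hx, if_neg (fun hh => hx hh.symm)]
    rw [hzero, abs_zero]
    exact abs_nonneg _
  · -- new index set J
    set g : Fin (m - k) → Fin m := fun t => if t = t₀ then j else σt t with hg
    have hginj : Function.Injective g := by
      intro a b' hab
      by_cases ha : a = t₀ <;> by_cases hb : b' = t₀
      · rw [ha, hb]
      · exfalso; rw [hg] at hab; simp only [if_pos ha, if_neg hb] at hab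
        exact hj2 (hab ▸ hσmem b')
      · exfalso; rw [hg] at hab; simp only [if_neg ha, if_pos hb] at hab
        exact hj2 (hab ▸ hσmem a)
      · rw [hg] at hab; simp only [if_neg ha, if_neg hb] at hab
        exact hσinj hab
    have hcardJ : (Finset.image g Finset.univ).card = m - k := by
      rw [Finset.card_image_of_injective _ hginj, Finset.card_univ, Fintype.card_fin]
    have hcardJc : ((Finset.image g Finset.univ)ᶜ).card = k := by
      rw [Finset.card_compl, hcardJ, Fintype.card_fin]; omega
    have hupd : M.updateCol i (Pi.single j 1) = eMat m k c g := by
      ext x y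
      rw [Matrix.updateCol_apply]
      by_cases hy : y = i
      · subst hy
        rw [if_pos rfl]
        have hg0 : g t₀ = j := if_pos rfl
        have heq : eMat m k c g x y = if g t₀ = x then 1 else 0 := by
          simp only [eMat, Matrix.of_apply, dif_neg hik']
          rfl
        rw [heq, hg0, Pi.single_apply]
        by_cases hx : x = j
        · simp [hx]
        · rw [if_neg hx, if_neg (fun hh => hx hh.symm)]
      · rw [if_neg hy, hMe]
        simp only [eMat, Matrix.of_apply]
        by_cases hlt : (y : ℕ) < k
        · rw [dif_pos hlt, dif_pos hlt]
        · rw [dif_neg hlt, dif_neg hlt]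
          have hne : (⟨(y : ℕ) - k, by have := y.isLt; omega⟩ : Fin (m - k)) ≠ t₀ := by
            intro hh
            apply hy
            have : (y : ℕ) - k = (i : ℕ) - k := by
              have := congrArg Fin.val hh
              simpa [ht₀] using this
            ext
            omega
          rw [hg]
          simp only [if_neg hne]
    rw [hupd, abs_det_eMat m k hk c g hginj hcardJc, habsI]
    have : |Matrix.det (Matrix.of fun i j : Fin k =>
        c j (↑((Finset.image g Finset.univ)ᶜ.orderIsoOfFin hcardJc i)))| =
        detAbs m k b (Finset.image g Finset.univ) := by
      rw [detAbs, dif_pos hcardJc]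
    rw [this]
    exact hstrong _ hcardJ
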